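/- Let M and N be disjointly supported complementary subspaces of L^p(Ω). Then for every f ∈ L^p(Ω), P_M(f) is a subvector of f, i.e., P_M(f) = f·χ_A for some measurable set A (equivalently, f - P_M(f) and P_M(f) are disjointly supported). -/
import Mathlib


open MeasureTheory

/-- If `L^p(Ω)` is the internal direct sum of disjointly supported subspaces `M` and `N`,
with projection `P = P_M`, then for every `f`, `P f` is a subvector of `f`:
`P f = f · χ_A` a.e. for some measurable set `A`. -/
theorem stmt10 {α : Type*} [MeasurableSpace α] (μ : Measure α) (p : ℝ) (hp : 1 ≤ p)
    [Fact (1 ≤ ENNReal.ofReal p)]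
    (M N : Submodule ℂ (Lp ℂ (ENNReal.ofReal p) μ))
    (hdisj : ∀ f ∈ M, ∀ g ∈ N, (f : α → ℂ) * (g : α → ℂ) =ᵐ[μ] 0)
    (hinf : M ⊓ N = ⊥) (hsup : M ⊔ N = ⊤)
    (P : Lp ℂ (ENNReal.ofReal p) μ →ₗ[ℂ] Lp ℂ (ENNReal.ofReal p) μ)
    (hPM : ∀ f ∈ M, P f = f) (hPN : ∀ f ∈ N, P f = 0) (hPran : ∀ f, P f ∈ M) :
    ∀ f : Lp ℂ (ENNReal.ofReal p) μ,
      ∃ A : Set α, MeasurableSet A ∧ (P f : α → ℂ) =ᵐ[μ] A.indicator (f : α → ℂ) := by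
  intro f
  -- decompose f = m + n
  obtain ⟨m, hm, n, hn, hmn⟩ := Submodule.mem_sup.mp (hsup ▸ Submodule.mem_top (x := f))
  have hPf : P f = m := by
    rw [← hmn, map_add, hPM m hm, hPN n hn, add_zero]
  have hsub : f - P f ∈ N := by
    rw [hPf, ← hmn]; simpa using hn
  have hgh : (P f : α → ℂ) * ((f - P f : Lp ℂ (ENNReal.ofReal p) μ) : α → ℂ) =ᵐ[μ] 0 :=
    hdisj (P f) (hPran f) (f - P f) hsub
  set h : Lp ℂ (ENNReal.ofReal p) μ := f - P f with hh
  have H := Lp.aestronglyMeasurable h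
  refine ⟨{x | H.mk h x = 0}, ?_, ?_⟩
  · exact H.stronglyMeasurable_mk.measurable (measurableSet_singleton 0)
  · filter_upwards [hgh, H.ae_eq_mk, Lp.coeFn_sub f (P f)] with x hx1 hx2 hx3
    simp only [Pi.sub_apply] at hx3
    by_cases hA : H.mk h x = 0
    · have h0 : (f : α → ℂ) x - (P f : α → ℂ) x = 0 := by
        rw [← hx3]; exact hx2.symm ▸ hA
      simp only [Set.indicator_apply, Set.mem_setOf_eq, if_pos hA]
      exact (sub_eq_zero.mp h0).symm
    · have hhx : (h : α → ℂ) x ≠ 0 := by rw [hx2]; exact hA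
      have hP0 : (P f : α → ℂ) x = 0 := by
        have := hx1
        simp only [Pi.mul_apply, Pi.zero_apply] at this
        exact (mul_eq_zero.mp this).resolve_right hhx
      rw [hP0]; simp only [Set.indicator_apply, Set.mem_setOf_eq, if_neg hA]
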